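/- Let q₁ = [A₁,B₁,C₁] and q₂ = [A₂,B₂,C₂] be PIBQFs with discriminants D₁, D₂ satisfying B_Δ(q₁,q₂)² < D₁D₂. Then (B₁A₂ − B₂A₁)·(B₂C₁ − B₁C₂) > 0; in particular B₁A₂ − B₂A₁ and B₂C₁ − B₁C₂ are nonzero and have the same sign. -/
import Mathlib


/-- A binary quadratic form `[A,B,C]`, encoded as a triple of integers. -/
abbrev BQF := ℤ × ℤ × ℤ

/-- The discriminant `B² - 4AC` of a binary quadratic form `[A,B,C]`. -/
def disc (q : BQF) : ℤ := q.2.1 ^ 2 - 4 * q.1 * q.2.2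

/-- A binary quadratic form is primitive if `gcd(A,B,C) = 1`. -/
def IsPrimitiveBQF (q : BQF) : Prop := Int.gcd q.1 (Int.gcd q.2.1 q.2.2) = 1

/-- A primitive indefinite binary quadratic form: primitive, of positive
nonsquare discriminant. -/
def IsPIBQF (q : BQF) : Prop := IsPrimitiveBQF q ∧ 0 < disc q ∧ ¬ IsSquare (disc q)

abbrev SL2Z := Matrix.SpecialLinearGroup (Fin 2) ℤ

/-- The action of `SL(2,ℤ)` on binary quadratic forms:
`(γ ∘ q)(x,y) = q(ax + by, cx + dy)`. -/
def actForm (γ : SL2Z) (q : BQF) : BQF :=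
  ((q.1 * (γ.1 0 0)^2 + q.2.1 * (γ.1 0 0) * (γ.1 1 0) + q.2.2 * (γ.1 1 0)^2),
   (2 * q.1 * (γ.1 0 0) * (γ.1 0 1) + q.2.1 * ((γ.1 0 0) * (γ.1 1 1) + (γ.1 0 1) * (γ.1 1 0))
      + 2 * q.2.2 * (γ.1 1 0) * (γ.1 1 1)),
   (q.1 * (γ.1 0 1)^2 + q.2.1 * (γ.1 0 1) * (γ.1 1 1) + q.2.2 * (γ.1 1 1)^2))

/-- Equivalence of binary quadratic forms under `SL(2,ℤ)`. -/
def equivF (q q' : BQF) : Prop := ∃ γ : SL2Z, actForm γ q = q'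

/-- `B_Δ(q₁,q₂) = B₁B₂ - 2A₁C₂ - 2A₂C₁`. -/
def BΔ (q₁ q₂ : BQF) : ℤ := q₁.2.1 * q₂.2.1 - 2 * q₁.1 * q₂.2.2 - 2 * q₂.1 * q₁.2.2

/-- A fundamental discriminant. -/
def IsFundamentalDisc (D : ℤ) : Prop :=
  (D % 4 = 1 ∧ Squarefree D) ∨
    (∃ m : ℤ, D = 4 * m ∧ Squarefree m ∧ (m % 4 = 2 ∨ m % 4 = 3))

/-- The Kronecker symbol `(a / p)` for a prime `p`. -/
def kron (a : ℤ) (p : ℕ) : ℤ :=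
  if p = 2 then (if a % 2 = 0 then 0 else if a % 8 = 1 ∨ a % 8 = 7 then 1 else -1)
  else jacobiSym a p

/-- `ε(p)`: the nonzero value among the Kronecker symbols `(D₁/p)`, `(D₂/p)`. -/
def epsP (D₁ D₂ : ℤ) (p : ℕ) : ℤ := if kron D₁ p = 0 then kron D₂ p else kron D₁ p

/-- The multiplicative extension of `ε` to positive integers. -/
def epsMul (D₁ D₂ : ℤ) (d : ℕ) : ℤ :=
  d.factorization.prod fun p k => (epsP D₁ D₂ p) ^ k

/-- Pairs of primitive forms of discriminants `D₁, D₂` with `B_Δ = n`. -/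
def PairSet (D₁ D₂ n : ℤ) : Type :=
  {p : BQF × BQF // IsPrimitiveBQF p.1 ∧ IsPrimitiveBQF p.2 ∧
    disc p.1 = D₁ ∧ disc p.2 = D₂ ∧ BΔ p.1 p.2 = n}

/-- Simultaneous `SL(2,ℤ)`-equivalence of pairs. -/
def pairRel (D₁ D₂ n : ℤ) (x y : PairSet D₁ D₂ n) : Prop :=
  ∃ γ : SL2Z, actForm γ x.1.1 = y.1.1 ∧ actForm γ x.1.2 = y.1.2

/-- `p(n)`: the number of simultaneous equivalence classes of pairs of primitive
forms of discriminants `D₁, D₂` with `B_Δ = n`. -/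
noncomputable def pCount (D₁ D₂ n : ℤ) : ℕ := Nat.card (Quot (pairRel D₁ D₂ n))

/-- The root geodesic of an indefinite form, as a subset of the upper half plane. -/
def rootGeodesic (q : BQF) : Set ℂ :=
  {z : ℂ | 0 < z.im ∧
    (q.1 : ℝ) * Complex.normSq z + (q.2.1 : ℝ) * z.re + (q.2.2 : ℝ) = 0}

/-- The first root `(-B + √D)/(2A)` of a PIBQF. -/
noncomputable def firstRoot (q : BQF) : ℝ :=
  (-(q.2.1 : ℝ) + Real.sqrt (disc q)) / (2 * q.1)

/-- The second root `(-B - √D)/(2A)` of a PIBQF. -/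
noncomputable def secondRoot (q : BQF) : ℝ :=
  (-(q.2.1 : ℝ) - Real.sqrt (disc q)) / (2 * q.1)


/-- from Proposition 5(ii) of the paper.
If the root geodesics of PIBQFs `q₁ = [A₁,B₁,C₁]`, `q₂ = [A₂,B₂,C₂]` intersect
(`B_Δ² < D₁D₂`), then `(B₁A₂ - B₂A₁)(B₂C₁ - B₁C₂) > 0`. -/
theorem sign_product_pos_of_intersecting
    (q₁ q₂ : BQF) (h₁ : IsPIBQF q₁) (h₂ : IsPIBQF q₂)
    (h : (BΔ q₁ q₂) ^ 2 < disc q₁ * disc q₂) :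
    0 < (q₁.2.1 * q₂.1 - q₂.2.1 * q₁.1) * (q₂.2.1 * q₁.2.2 - q₁.2.1 * q₂.2.2) := by
  simp only [disc, BΔ] at h
  nlinarith [sq_nonneg (2*(q₂.1*q₁.2.2 - q₁.1*q₂.2.2)), h]
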